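/- arXiv:1303.4875 — 8 statements merged into one kernel-verified Lean document; each statement's English description precedes it below -/
import Mathlib

section
/- Let X be a centered, square-integrable random vector in ℝ^k with covariance matrix K = E[X Xᵀ], let Y be a centered, square-integrable real random variable, and let κ = E[X Y]. Let Θ ⊆ ℝ^p be open, and let φ: Θ → ℝ^k and v: Θ → ℝ be differentiable at a point θ₀ ∈ Θ at which K φ(θ₀) = κ (so that φ(θ₀)ᵀX is the minimum mean squared error linear predictor). Define, for θ ∈ Θ, the ℝ^{k+1}-valued function h(θ) = E[H(θ)] where H(θ) = (X (Y − φ(θ)ᵀX), (Y − φ(θ)ᵀX)² − v(θ)). Then h is differentiable at θ₀ and its derivative (Jacobian, a (k+1)×p matrix) at θ₀ equals −(K Dφ(θ₀) ; Dv(θ₀)), i.e., its first k rows are −K times the Jacobian of φ at θ₀ and its last row is minus the gradient of v at θ₀. (This identifies the sensitivity matrix S(θ₀)ᵀ = E[∂_{θᵀ} H(θ₀)] of the prediction-based estimating function.) -/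
open MeasureTheory Matrix

/-- With `X` a centered square-integrable random vector in `ℝ^k` with
covariance matrix `K`, `Y` centered square-integrable, `κ = E[XY]`, `Θ ⊆ ℝ^p` open,
`φ : Θ → ℝ^k` and `v : Θ → ℝ` differentiable at `θ₀ ∈ Θ` with `K φ(θ₀) = κ`, the
function `h(θ) = E[H(θ)]`, where
`H(θ) = (X (Y − φ(θ)ᵀX), (Y − φ(θ)ᵀX)² − v(θ))`,
is differentiable at `θ₀` with derivative `u ↦ (−K (Dφ(θ₀) u), −Dv(θ₀) u)`,
i.e. the Jacobian `−(K Dφ(θ₀) ; Dv(θ₀))`. -/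
theorem stmt_3 {Ω : Type*} [MeasurableSpace Ω] (μ : Measure Ω) [IsProbabilityMeasure μ]
    {k p : ℕ} (X : Ω → Fin k → ℝ) (Y : Ω → ℝ)
    (hX : ∀ i, MemLp (fun ω => X ω i) 2 μ) (hY : MemLp Y 2 μ)
    (hXcentered : ∀ i, ∫ ω, X ω i ∂μ = 0) (hYcentered : ∫ ω, Y ω ∂μ = 0)
    (K : Matrix (Fin k) (Fin k) ℝ)
    (hK : K = Matrix.of fun i j => ∫ ω, X ω i * X ω j ∂μ)
    (κ : Fin k → ℝ) (hκ : κ = fun i => ∫ ω, X ω i * Y ω ∂μ)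
    (Θ : Set (Fin p → ℝ)) (hΘ : IsOpen Θ) (θ₀ : Fin p → ℝ) (hθ₀ : θ₀ ∈ Θ)
    (φ : (Fin p → ℝ) → Fin k → ℝ) (v : (Fin p → ℝ) → ℝ)
    (Dφ : (Fin p → ℝ) →L[ℝ] (Fin k → ℝ)) (Dv : (Fin p → ℝ) →L[ℝ] ℝ)
    (hφdiff : HasFDerivAt φ Dφ θ₀) (hvdiff : HasFDerivAt v Dv θ₀)
    (hopt : K *ᵥ φ θ₀ = κ)
    (h : (Fin p → ℝ) → (Fin k → ℝ) × ℝ)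
    (hh : h = fun θ =>
      ((fun i => ∫ ω, X ω i * (Y ω - φ θ ⬝ᵥ X ω) ∂μ),
        (∫ ω, (Y ω - φ θ ⬝ᵥ X ω) ^ 2 ∂μ) - v θ)) :
    HasFDerivAt h
      (ContinuousLinearMap.prod
        (-(((Matrix.mulVecLin K).toContinuousLinearMap).comp Dφ)) (-Dv)) θ₀ := by
  -- integrability of products of L² functions
  have hmul : ∀ (f g : Ω → ℝ), MemLp f 2 μ → MemLp g 2 μ →
      Integrable (fun ω => f ω * g ω) μ := by
    intro f g hf hg
    have h1 : MemLp (f • g) 1 μ := hg.smul hf (hpqr := ⟨by simp [one_div, ENNReal.inv_two_add_inv_two]⟩)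
    rw [memLp_one_iff_integrable] at h1
    exact h1
  have hXY : ∀ i, Integrable (fun ω => X ω i * Y ω) μ := fun i => hmul _ _ (hX i) hY
  have hXX : ∀ i j, Integrable (fun ω => X ω i * X ω j) μ := fun i j => hmul _ _ (hX i) (hX j)
  have hYX : ∀ j, Integrable (fun ω => Y ω * X ω j) μ := fun j => hmul _ _ hY (hX j)
  have hYY : Integrable (fun ω => Y ω * Y ω) μ := hmul _ _ hY hY
  have hC : (∫ ω, Y ω * Y ω ∂μ) = ∫ ω, Y ω ^ 2 ∂μ := by
    congr 1; funext ω; ring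
  have hKij : ∀ i j, K i j = ∫ ω, X ω i * X ω j ∂μ := by intro i j; rw [hK]; rfl
  have hsym : ∀ i j, K i j = K j i := by
    intro i j; rw [hKij, hKij]; congr 1; funext ω; ring
  have hκi : ∀ i, κ i = ∫ ω, X ω i * Y ω ∂μ := by intro i; rw [hκ]
  -- explicit closed form of h
  have hform : h = fun θ =>
      ((fun i => κ i - ∑ j, K i j * φ θ j),
        (∫ ω, Y ω ^ 2 ∂μ) - 2 * (∑ j, κ j * φ θ j)
          + (∑ i, ∑ j, φ θ i * (K i j * φ θ j)) - v θ) := by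
    rw [hh]; funext θ
    refine Prod.ext ?_ ?_
    · funext i
      show (∫ ω, X ω i * (Y ω - φ θ ⬝ᵥ X ω) ∂μ) = κ i - ∑ j, K i j * φ θ j
      have heq : (fun ω => X ω i * (Y ω - φ θ ⬝ᵥ X ω))
          = fun ω => X ω i * Y ω - ∑ j, φ θ j * (X ω i * X ω j) := by
        funext ω
        rw [dotProduct, mul_sub, Finset.mul_sum]
        congr 1
        exact Finset.sum_congr rfl fun j _ => by ring
      rw [heq, integral_sub (hXY i)
        (integrable_finset_sum _ fun j _ => ((hXX i j).const_mul _)),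
        integral_finset_sum _ fun j _ => ((hXX i j).const_mul _), ← hκi]
      congr 1
      refine Finset.sum_congr rfl fun j _ => ?_
      rw [integral_const_mul, ← hKij, mul_comm]
    · show (∫ ω, (Y ω - φ θ ⬝ᵥ X ω) ^ 2 ∂μ) - v θ
          = (∫ ω, Y ω ^ 2 ∂μ) - 2 * (∑ j, κ j * φ θ j)
            + (∑ i, ∑ j, φ θ i * (K i j * φ θ j)) - v θ
      have hs : ∀ ω : Ω, (∑ i, ∑ j, (φ θ i * φ θ j) * (X ω i * X ω j))
          = (φ θ ⬝ᵥ X ω) * (φ θ ⬝ᵥ X ω) := by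
        intro ω
        rw [dotProduct, Fintype.sum_mul_sum]
        exact Finset.sum_congr rfl fun i _ => Finset.sum_congr rfl fun j _ => by ring
      have hy : ∀ ω : Ω, (∑ j, φ θ j * (Y ω * X ω j)) = Y ω * (φ θ ⬝ᵥ X ω) := by
        intro ω
        rw [dotProduct, Finset.mul_sum]
        exact Finset.sum_congr rfl fun j _ => by ring
      have heq : (fun ω => (Y ω - φ θ ⬝ᵥ X ω) ^ 2)
          = fun ω => Y ω * Y ω - 2 * (∑ j, φ θ j * (Y ω * X ω j))
              + ∑ i, ∑ j, (φ θ i * φ θ j) * (X ω i * X ω j) := by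
        funext ω
        rw [hs, hy]; ring
      have int1 : Integrable (fun ω => 2 * (∑ j, φ θ j * (Y ω * X ω j))) μ :=
        (integrable_finset_sum _ fun j _ => ((hYX j).const_mul _)).const_mul 2
      have int2 : Integrable (fun ω => ∑ i, ∑ j, (φ θ i * φ θ j) * (X ω i * X ω j)) μ :=
        integrable_finset_sum _ fun i _ =>
          integrable_finset_sum _ fun j _ => ((hXX i j).const_mul _)
      have int12 : Integrable
          (fun ω => Y ω * Y ω - 2 * (∑ j, φ θ j * (Y ω * X ω j))) μ := hYY.sub int1
      rw [heq, integral_add int12 int2, integral_sub hYY int1, hC]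
      congr 1
      congr 1
      · congr 1
        rw [integral_const_mul]
        congr 1
        rw [integral_finset_sum _ fun j _ => ((hYX j).const_mul _)]
        refine Finset.sum_congr rfl fun j _ => ?_
        rw [integral_const_mul, mul_comm]
        congr 1
        rw [hκi]
        congr 1; funext ω; ring
      · rw [integral_finset_sum _ fun i _ =>
          integrable_finset_sum _ fun j _ => ((hXX i j).const_mul _)]
        refine Finset.sum_congr rfl fun i _ => ?_
        rw [integral_finset_sum _ fun j _ => ((hXX i j).const_mul _)]
        refine Finset.sum_congr rfl fun j _ => ?_
        rw [integral_const_mul, ← hKij]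
        ring
  -- derivative of each coordinate of φ
  have hφi : ∀ i, HasFDerivAt (fun θ => φ θ i)
      ((ContinuousLinearMap.proj i).comp Dφ) θ₀ := by
    intro i
    exact ((ContinuousLinearMap.proj i :
      (Fin k → ℝ) →L[ℝ] ℝ)).hasFDerivAt.comp θ₀ hφdiff
  -- first component
  set L : (Fin k → ℝ) →L[ℝ] (Fin k → ℝ) := (Matrix.mulVecLin K).toContinuousLinearMap with hL
  have hfun1 : (fun θ => (fun i => κ i - ∑ j, K i j * φ θ j))
      = fun θ => κ - L (φ θ) := by
    funext θ; funext i
    simp [hL, Matrix.mulVec, dotProduct]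
  have H1 : HasFDerivAt (fun θ => (fun i => κ i - ∑ j, K i j * φ θ j))
      (-(L.comp Dφ)) θ₀ := by
    rw [hfun1]
    exact ((hasFDerivAt_const κ θ₀).sub
      (L.hasFDerivAt.comp θ₀ hφdiff)).congr_fderiv (zero_sub _)
  -- second component
  have hg1 : HasFDerivAt (fun θ => ∑ j, κ j * φ θ j)
      (∑ j, κ j • ((ContinuousLinearMap.proj j).comp Dφ)) θ₀ :=
    HasFDerivAt.fun_sum fun j _ => (hφi j).const_mul (κ j)
  have hg2 : HasFDerivAt (fun θ => ∑ i, ∑ j, φ θ i * (K i j * φ θ j))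
      (∑ i, ∑ j, (φ θ₀ i • (K i j • ((ContinuousLinearMap.proj j).comp Dφ))
        + (K i j * φ θ₀ j) • ((ContinuousLinearMap.proj i).comp Dφ))) θ₀ :=
    HasFDerivAt.fun_sum fun i _ => HasFDerivAt.fun_sum fun j _ =>
      (hφi i).mul ((hφi j).const_mul (K i j))
  have hopti : ∀ i, ∑ j, K i j * φ θ₀ j = κ i := by
    intro i
    have := congrFun hopt i
    simpa [Matrix.mulVec, dotProduct] using this
  have H2 : HasFDerivAt (fun θ =>
      (∫ ω, Y ω ^ 2 ∂μ) - 2 * (∑ j, κ j * φ θ j)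
        + (∑ i, ∑ j, φ θ i * (K i j * φ θ j)) - v θ)
      (-Dv) θ₀ := by
    have H := (((hg1.const_mul 2).const_sub (∫ ω, Y ω ^ 2 ∂μ)).add hg2).sub hvdiff
    refine H.congr_fderiv ?_
    ext u
    simp only [ContinuousLinearMap.coe_sub', ContinuousLinearMap.add_apply, Pi.sub_apply,
      ContinuousLinearMap.neg_apply, ContinuousLinearMap.coe_sum',
      Finset.sum_apply, ContinuousLinearMap.coe_smul', Pi.smul_apply,
      ContinuousLinearMap.coe_comp', Function.comp_apply,
      ContinuousLinearMap.proj_apply, smul_eq_mul, ContinuousLinearMap.add_apply]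
    have e3 : ∑ i, ∑ j, φ θ₀ i * (K i j * Dφ u j) = ∑ j, κ j * Dφ u j := by
      rw [Finset.sum_comm]
      refine Finset.sum_congr rfl fun j _ => ?_
      have : ∀ i, φ θ₀ i * (K i j * Dφ u j) = (K j i * φ θ₀ i) * Dφ u j := by
        intro i; rw [hsym i j]; ring
      rw [Finset.sum_congr rfl fun i _ => this i, ← Finset.sum_mul, hopti j]
    have e4 : ∑ i, ∑ j, K i j * φ θ₀ j * Dφ u i = ∑ i, κ i * Dφ u i := by
      refine Finset.sum_congr rfl fun i _ => ?_
      rw [← Finset.sum_mul, hopti i]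
    have esplit : ∑ i, ∑ j, (φ θ₀ i * (K i j * Dφ u j) + K i j * φ θ₀ j * Dφ u i)
        = (∑ i, ∑ j, φ θ₀ i * (K i j * Dφ u j))
          + ∑ i, ∑ j, K i j * φ θ₀ j * Dφ u i := by
      rw [← Finset.sum_add_distrib]
      exact Finset.sum_congr rfl fun i _ => Finset.sum_add_distrib
    rw [esplit, e3, e4]
    ring
  rw [hform]
  exact H1.prodMk H2
end

section
/- Let S be a real p×(k+1) matrix of rank p, let M₁ be a symmetric positive definite (k+1)×(k+1) real matrix, and let M₂ be a symmetric positive semidefinite (k+1)×(k+1) real matrix; set M̄ = M₁ + M₂, W = S M₁⁻¹ Sᵀ and B = S M₁⁻¹ M₂ M₁⁻¹ Sᵀ. Then W and W + B are symmetric positive definite, and the p×p matrix S M̄⁻¹ Sᵀ − W (W + B)⁻¹ W is symmetric positive semidefinite. Equivalently, since W(W+B)⁻¹W = (W⁻¹ + W⁻¹ B W⁻¹)⁻¹, the inverse asymptotic covariance of the optimal prediction-based estimator, S M̄⁻¹ Sᵀ, dominates that of the maximum pseudo-likelihood estimator, (W⁻¹ + W⁻¹ B W⁻¹)⁻¹,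 in the positive semidefinite order. -/
open Matrix

lemma aux_ct_eq_t {m n : Type*} (X : Matrix m n ℝ) : Xᴴ = Xᵀ :=
  X.conjTranspose_eq_transpose_of_trivial

lemma aux_posDef_conj {m n : Type*} [Fintype m] [Fintype n] [DecidableEq n]
    {A : Matrix n n ℝ} (hA : A.PosDef) {X : Matrix m n ℝ}
    (hX : Function.Injective X.vecMul) : (X * A * Xᵀ).PosDef := by
  refine Matrix.PosDef.of_dotProduct_mulVec_pos
    (aux_ct_eq_t X ▸ (hA.posSemidef.mul_mul_conjTranspose_same X).isHermitian) fun x hx => ?_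
  have hy : x ᵥ* X ≠ 0 := by
    intro h
    exact hx (hX (show X.vecMul x = X.vecMul 0 by simpa using h))
  have key : x ⬝ᵥ (X * A * Xᵀ) *ᵥ x = (x ᵥ* X) ⬝ᵥ A *ᵥ (x ᵥ* X) := by
    rw [← Matrix.mulVec_mulVec, ← Matrix.mulVec_mulVec, Matrix.mulVec_transpose,
      Matrix.dotProduct_mulVec]
  have := hA.dotProduct_mulVec_pos hy
  simpa [key] using this

/-- Let `S` be a real `p×(k+1)` matrix of rank `p`, `M₁` symmetric positive
definite and `M₂` symmetric positive semidefinite of size `(k+1)×(k+1)`; set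
`M̄ = M₁ + M₂`, `W = S M₁⁻¹ Sᵀ` and `B = S M₁⁻¹ M₂ M₁⁻¹ Sᵀ`. Then `W` and `W + B` are
symmetric positive definite and `S M̄⁻¹ Sᵀ − W (W + B)⁻¹ W` is symmetric positive
semidefinite. -/
theorem stmt_9 {p k : ℕ} (S : Matrix (Fin p) (Fin k ⊕ Unit) ℝ) (hS : S.rank = p)
    (M₁ M₂ : Matrix (Fin k ⊕ Unit) (Fin k ⊕ Unit) ℝ)
    (hM₁ : M₁.PosDef) (hM₂ : M₂.PosSemidef)
    (Mbar : Matrix (Fin k ⊕ Unit) (Fin k ⊕ Unit) ℝ) (hMbar : Mbar = M₁ + M₂)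
    (W B : Matrix (Fin p) (Fin p) ℝ)
    (hW : W = S * M₁⁻¹ * Sᵀ) (hB : B = S * M₁⁻¹ * M₂ * M₁⁻¹ * Sᵀ) :
    W.PosDef ∧ (W + B).PosDef ∧
      (S * Mbar⁻¹ * Sᵀ - W * (W + B)⁻¹ * W).PosSemidef := by
  -- injectivity of the row action of S, from full row rank
  have hSinj : Function.Injective S.vecMul := by
    rw [Matrix.vecMul_injective_iff, linearIndependent_iff_card_eq_finrank_span,
      Fintype.card_fin, Set.finrank, ← Matrix.rank_eq_finrank_span_row, hS]
  have hM₁inv : M₁⁻¹.PosDef := hM₁.inv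
  have hM₁d : IsUnit M₁.det := (Matrix.isUnit_iff_isUnit_det _).mp hM₁.isUnit
  have hM₁it : M₁⁻¹ᵀ = M₁⁻¹ := by
    rw [Matrix.transpose_nonsing_inv, ← aux_ct_eq_t, hM₁.isHermitian.eq]
  -- W is PosDef
  have hWpd : W.PosDef := hW ▸ aux_posDef_conj hM₁inv hSinj
  -- Mbar is PosDef
  have hMbarPD : Mbar.PosDef := hMbar ▸ hM₁.add_posSemidef hM₂
  -- T := S * M₁⁻¹ has injective vecMul
  set T : Matrix (Fin p) (Fin k ⊕ Unit) ℝ := S * M₁⁻¹ with hT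
  have hTt : Tᵀ = M₁⁻¹ * Sᵀ := by rw [hT, Matrix.transpose_mul, hM₁it]
  have hTinj : Function.Injective T.vecMul := by
    intro a b hab
    apply hSinj
    apply Matrix.vecMul_injective_iff_isUnit.mpr
      (Matrix.isUnit_nonsing_inv_iff.mpr hM₁.isUnit)
    simpa only [hT, Matrix.vecMul_vecMul] using hab
  have h1 : S * M₁⁻¹ * M₁ = S := by
    rw [Matrix.mul_assoc, Matrix.nonsing_inv_mul _ hM₁d, Matrix.mul_one]
  -- W + B = T * Mbar * Tᵀ
  have hWB : W + B = T * Mbar * Tᵀ := by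
    rw [hMbar, hTt, Matrix.mul_add, Matrix.add_mul, hW, hB, hT, h1]
    simp [Matrix.mul_assoc]
  have hWBpd : (W + B).PosDef := hWB ▸ aux_posDef_conj hMbarPD hTinj
  refine ⟨hWpd, hWBpd, ?_⟩
  -- square root of Mbar
  open MatrixOrder in set C := CFC.sqrt Mbar with hCdef
  have hCC : C * C = Mbar := by
    open MatrixOrder in exact CFC.sqrt_mul_sqrt_self Mbar hMbarPD.posSemidef.nonneg
  have hCt : Cᵀ = C := by
    open MatrixOrder in rw [← aux_ct_eq_t, (CFC.sqrt_nonneg Mbar).posSemidef.isHermitian.eq]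
  have hCd : IsUnit C.det := by
    have hdet : C.det * C.det = Mbar.det := by rw [← Matrix.det_mul, hCC]
    refine isUnit_iff_ne_zero.mpr fun h => hMbarPD.det_pos.ne' ?_
    rw [← hdet, h, mul_zero]
  have hCit : C⁻¹ᵀ = C⁻¹ := by rw [Matrix.transpose_nonsing_inv, hCt]
  have hCiC : C⁻¹ * C = 1 := Matrix.nonsing_inv_mul _ hCd
  have hCinv2 : C⁻¹ * C⁻¹ = Mbar⁻¹ := by rw [← Matrix.mul_inv_rev, hCC]
  -- the two factor matrices
  set X : Matrix (Fin p) (Fin k ⊕ Unit) ℝ := S * C⁻¹ with hX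
  set Y : Matrix (Fin p) (Fin k ⊕ Unit) ℝ := T * C with hY
  have hXt : Xᵀ = C⁻¹ * Sᵀ := by rw [hX, Matrix.transpose_mul, hCit]
  have hYt : Yᵀ = C * Tᵀ := by rw [hY, Matrix.transpose_mul, hCt]
  have hXX : X * Xᵀ = S * Mbar⁻¹ * Sᵀ := by
    rw [hXt, hX, show S * C⁻¹ * (C⁻¹ * Sᵀ) = S * (C⁻¹ * C⁻¹) * Sᵀ by
      simp [Matrix.mul_assoc], hCinv2]
  have hYY : Y * Yᵀ = W + B := by
    rw [hYt, hY, hWB, show T * C * (C * Tᵀ) = T * (C * C) * Tᵀ by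
      simp [Matrix.mul_assoc], hCC]
  have hXY : X * Yᵀ = W := by
    rw [hYt, hX, hW, hTt, show S * C⁻¹ * (C * (M₁⁻¹ * Sᵀ)) = S * (C⁻¹ * C) * (M₁⁻¹ * Sᵀ) by
      simp [Matrix.mul_assoc], hCiC, Matrix.mul_one, Matrix.mul_assoc]
  have hYX : Y * Xᵀ = W := by
    have h2 : Y * Xᵀ = (X * Yᵀ)ᵀ := by
      conv_rhs => rw [Matrix.transpose_mul, Matrix.transpose_transpose]
    rw [h2, hXY, ← aux_ct_eq_t, hWpd.isHermitian.eq]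
  -- the projection
  set P : Matrix (Fin k ⊕ Unit) (Fin k ⊕ Unit) ℝ := Yᵀ * (W + B)⁻¹ * Y with hP
  have hWBd : IsUnit (W + B).det := (Matrix.isUnit_iff_isUnit_det _).mp hWBpd.isUnit
  have hGi : (W + B)⁻¹ * (W + B) = 1 := Matrix.nonsing_inv_mul _ hWBd
  have hGt : ((W + B)⁻¹)ᵀ = (W + B)⁻¹ := by
    rw [Matrix.transpose_nonsing_inv, ← aux_ct_eq_t, hWBpd.isHermitian.eq]
  have hPt : Pᵀ = P := by
    rw [hP]
    simp [Matrix.transpose_mul, hGt, Matrix.mul_assoc]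
  have hPP : P * P = P := by
    calc P * P = Yᵀ * (((W + B)⁻¹ * (Y * Yᵀ)) * ((W + B)⁻¹ * Y)) := by
          rw [hP]; simp [Matrix.mul_assoc]
      _ = P := by rw [hYY, hGi, Matrix.one_mul, hP, Matrix.mul_assoc]
  have hsq : (1 - P) * (1 - P) = 1 - P := by
    rw [Matrix.sub_mul, Matrix.mul_sub, Matrix.mul_sub, hPP, Matrix.mul_one, Matrix.one_mul]
    simp
  have h1Ppsd : (1 - P).PosSemidef := by
    have h := Matrix.posSemidef_self_mul_conjTranspose (1 - P)
    rwa [aux_ct_eq_t, Matrix.transpose_sub, Matrix.transpose_one, hPt, hsq] at h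
  have h2 : X * P * Xᵀ = W * (W + B)⁻¹ * W := by
    calc X * P * Xᵀ = (X * Yᵀ) * ((W + B)⁻¹ * (Y * Xᵀ)) := by
          rw [hP]; simp [Matrix.mul_assoc]
      _ = W * (W + B)⁻¹ * W := by rw [hXY, hYX, Matrix.mul_assoc]
  have hfin : S * Mbar⁻¹ * Sᵀ - W * (W + B)⁻¹ * W = X * (1 - P) * Xᵀ := by
    rw [Matrix.mul_sub, Matrix.sub_mul, Matrix.mul_one, h2, hXX]
  have h := h1Ppsd.mul_mul_conjTranspose_same X
  rw [aux_ct_eq_t] at h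
  rwa [hfin]
end

section
/- Let σ > 0, r > 0, and a, b be real numbers with |b| < −a (so a < 0), and set λ = √(a² − b²) > 0. Assume a + b·cosh(λr) ≠ 0 and define K₀ = σ²(b·sinh(λr) − λ) / (2λ(a + b·cosh(λr))) and, for t ∈ [0, r], K(t) = K₀·cosh(λt) − (σ²/(2λ))·sinh(λt). Then for all t ∈ (0, r), K′(t) = a·K(t) + b·K(r − t) (the delay Yule–Walker equation ∂_t K(t) = a K(t) + b K(t − r) with the even extension K(t − r) = K(r − t)), K′(0⁺) = −σ²/2, and the boundary condition 2(a·K(0) + b·K(r)) = −σ² holds. -/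
open Real Set

lemma stmt_10_key (a b lam c K₀ cr sr ct st : ℝ) (hD : a + b * cr ≠ 0)
    (hK₀ : K₀ * (a + b * cr) = c * (b * sr - lam))
    (hpyth : cr ^ 2 - sr ^ 2 = 1) (hlam2 : lam ^ 2 = a ^ 2 - b ^ 2) :
    K₀ * (lam * st) - c * (lam * ct) =
      a * (K₀ * ct - c * st) + b * (K₀ * (cr * ct - sr * st) - c * (sr * ct - cr * st)) := by
  have h2 : K₀ * (lam + b * sr) = c * (b * cr - a) := by
    apply mul_right_cancel₀ hD
    linear_combination (lam + b * sr) * hK₀ - c * b ^ 2 * hpyth - c * hlam2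
  linear_combination (-ct) * hK₀ + st * h2

/-- In the case `|b| < −a` of the affine delay equation
`dX(t) = [aX(t) + bX(t−r)]dt + σ dW(t)`, the function
`K(t) = K₀ cosh(λt) − (σ²/(2λ)) sinh(λt)` with `λ = √(a² − b²)` and
`K₀ = σ²(b sinh(λr) − λ)/(2λ(a + b cosh(λr)))` satisfies the delay Yule–Walker
equation `K′(t) = aK(t) + bK(r − t)` on `(0, r)`, has right derivative `−σ²/2` at `0`
and satisfies the boundary condition `2(aK(0) + bK(r)) = −σ²`. -/
theorem stmt_10 {σ r a b : ℝ} (hσ : 0 < σ) (hr : 0 < r) (hab : |b| < -a)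
    (lam : ℝ) (hlam : lam = Real.sqrt (a ^ 2 - b ^ 2))
    (hden : a + b * Real.cosh (lam * r) ≠ 0)
    (K₀ : ℝ)
    (hK₀ : K₀ = σ ^ 2 * (b * Real.sinh (lam * r) - lam) /
      (2 * lam * (a + b * Real.cosh (lam * r))))
    (K : ℝ → ℝ)
    (hK : K = fun t => K₀ * Real.cosh (lam * t) - σ ^ 2 / (2 * lam) * Real.sinh (lam * t)) :
    (∀ t ∈ Ioo 0 r, HasDerivAt K (a * K t + b * K (r - t)) t) ∧
      HasDerivWithinAt K (-σ ^ 2 / 2) (Ici 0) 0 ∧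
      2 * (a * K 0 + b * K r) = -σ ^ 2 := by
  have hb2 : b ^ 2 < a ^ 2 := by
    have h1 : |b| < |a| := lt_of_lt_of_le hab (neg_le_abs a)
    calc b ^ 2 = |b| ^ 2 := (sq_abs b).symm
      _ < |a| ^ 2 := by nlinarith [abs_nonneg b]
      _ = a ^ 2 := sq_abs a
  have hlampos : 0 < lam := by
    rw [hlam]; exact Real.sqrt_pos.mpr (by linarith)
  have hlamne : lam ≠ 0 := ne_of_gt hlampos
  have hlam2 : lam ^ 2 = a ^ 2 - b ^ 2 := by
    rw [hlam, sq_sqrt (by linarith : (0:ℝ) ≤ a ^ 2 - b ^ 2)]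
  set c : ℝ := σ ^ 2 / (2 * lam) with hc
  have hK₀D : K₀ * (a + b * Real.cosh (lam * r)) = c * (b * Real.sinh (lam * r) - lam) := by
    rw [hK₀, hc]; field_simp
  -- derivative of K at any point
  have hderiv : ∀ t : ℝ, HasDerivAt K (K₀ * (lam * Real.sinh (lam * t))
      - c * (lam * Real.cosh (lam * t))) t := by
    intro t
    rw [hK]
    have hlin : HasDerivAt (fun t : ℝ => lam * t) lam t := by
      simpa using (hasDerivAt_id t).const_mul lam
    have h1 : HasDerivAt (fun t : ℝ => Real.cosh (lam * t)) (lam * Real.sinh (lam * t)) t := by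
      simpa [mul_comm, Function.comp_def] using (Real.hasDerivAt_cosh (lam * t)).comp t hlin
    have h2 : HasDerivAt (fun t : ℝ => Real.sinh (lam * t)) (lam * Real.cosh (lam * t)) t := by
      simpa [mul_comm, Function.comp_def] using (Real.hasDerivAt_sinh (lam * t)).comp t hlin
    exact (h1.const_mul K₀).sub (h2.const_mul c)
  refine ⟨?_, ?_, ?_⟩
  · intro t ht
    have h := hderiv t
    convert h using 1
    have hpyth : Real.cosh (lam * r) ^ 2 - Real.sinh (lam * r) ^ 2 = 1 :=
      Real.cosh_sq_sub_sinh_sq (lam * r)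
    have key := stmt_10_key a b lam c K₀ (Real.cosh (lam * r)) (Real.sinh (lam * r))
      (Real.cosh (lam * t)) (Real.sinh (lam * t)) hden hK₀D hpyth hlam2
    rw [hK]
    simp only [mul_sub, Real.cosh_sub, Real.sinh_sub]
    linear_combination -key
  · have h := (hderiv 0).hasDerivWithinAt (s := Ici 0)
    refine h.congr_deriv ?_
    rw [mul_zero, Real.sinh_zero, Real.cosh_zero, hc]
    field_simp
    ring
  · rw [hK]
    simp only [mul_zero, Real.cosh_zero, Real.sinh_zero, mul_one, sub_zero]
    have hcl : c * lam = σ ^ 2 / 2 := by rw [hc]; field_simp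
    linear_combination 2 * hK₀D - 2 * hcl
end

section
/- Let σ > 0, r > 0, and let a = b < 0 be real. Define K₀ = σ²(b r − 1)/(4b) and, for t ∈ [0, r], K(t) = K₀ − (σ²/2)·t. Then for all t ∈ (0, r), K′(t) = a·K(t) + b·K(r − t) (the delay Yule–Walker equation with the even extension K(t − r) = K(r − t)), K′(0⁺) = −σ²/2, and 2(a·K(0) + b·K(r)) = −σ². -/
open Real Set

/-- In the boundary case `a = b < 0` of the affine delay equation, the
function `K(t) = K₀ − (σ²/2)t` with `K₀ = σ²(br − 1)/(4b)` satisfies the delay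
Yule–Walker equation `K′(t) = aK(t) + bK(r − t)` on `(0, r)`, has right derivative
`−σ²/2` at `0` and satisfies `2(aK(0) + bK(r)) = −σ²`. -/
theorem stmt_11 {σ r a b : ℝ} (hσ : 0 < σ) (hr : 0 < r) (hab : a = b) (hb : b < 0)
    (K₀ : ℝ) (hK₀ : K₀ = σ ^ 2 * (b * r - 1) / (4 * b))
    (K : ℝ → ℝ) (hK : K = fun t => K₀ - σ ^ 2 / 2 * t) :
    (∀ t ∈ Ioo 0 r, HasDerivAt K (a * K t + b * K (r - t)) t) ∧
      HasDerivWithinAt K (-σ ^ 2 / 2) (Ici 0) 0 ∧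
      2 * (a * K 0 + b * K r) = -σ ^ 2 := by
  subst hK hab hK₀
  have hb' : a ≠ 0 := ne_of_lt hb
  have hd : ∀ t : ℝ, HasDerivAt (fun t => σ ^ 2 * (a * r - 1) / (4 * a) - σ ^ 2 / 2 * t)
      (-σ ^ 2 / 2) t := by
    intro t
    have := ((hasDerivAt_id t).const_mul (σ ^ 2 / 2)).const_sub
      (σ ^ 2 * (a * r - 1) / (4 * a))
    simpa [neg_div] using this
  refine ⟨fun t ht => ?_, (hd 0).hasDerivWithinAt, by field_simp; ring⟩
  convert hd t using 1
  simp only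
  field_simp
  ring
end

section
/- Let σ > 0, r > 0, and a, b be real numbers with b < −|a|, and set λ = √(b² − a²) > 0. Assume a + b·cos(λr) ≠ 0 and define K₀ = σ²(b·sin(λr) − λ) / (2λ(a + b·cos(λr))) and, for t ∈ [0, r], K(t) = K₀·cos(λt) − (σ²/(2λ))·sin(λt). Then for all t ∈ (0, r), K′(t) = a·K(t) + b·K(r − t) (the delay Yule–Walker equation with the even extension K(t − r) = K(r − t)), K′(0⁺) = −σ²/2, and 2(a·K(0) + b·K(r)) = −σ². -/
open Real Set

/-- In the case `b < −|a|` of the affine delay equation, the function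
`K(t) = K₀ cos(λt) − (σ²/(2λ)) sin(λt)` with `λ = √(b² − a²)` and
`K₀ = σ²(b sin(λr) − λ)/(2λ(a + b cos(λr)))` satisfies the delay Yule–Walker equation
`K′(t) = aK(t) + bK(r − t)` on `(0, r)`, has right derivative `−σ²/2` at `0` and
satisfies `2(aK(0) + bK(r)) = −σ²`. -/
theorem stmt_12 {σ r a b : ℝ} (hσ : 0 < σ) (hr : 0 < r) (hab : b < -|a|)
    (lam : ℝ) (hlam : lam = Real.sqrt (b ^ 2 - a ^ 2))
    (hden : a + b * Real.cos (lam * r) ≠ 0)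
    (K₀ : ℝ)
    (hK₀ : K₀ = σ ^ 2 * (b * Real.sin (lam * r) - lam) /
      (2 * lam * (a + b * Real.cos (lam * r))))
    (K : ℝ → ℝ)
    (hK : K = fun t => K₀ * Real.cos (lam * t) - σ ^ 2 / (2 * lam) * Real.sin (lam * t)) :
    (∀ t ∈ Ioo 0 r, HasDerivAt K (a * K t + b * K (r - t)) t) ∧
      HasDerivWithinAt K (-σ ^ 2 / 2) (Ici 0) 0 ∧
      2 * (a * K 0 + b * K r) = -σ ^ 2 := by
  have habs : |a| ≤ -b := by linarith [abs_nonneg a]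
  have hb2 : a ^ 2 < b ^ 2 := by
    have h1 : |a| < |b| := by
      rw [abs_of_neg (by linarith [abs_nonneg a] : b < 0)]; linarith [abs_nonneg a]
    calc a ^ 2 = |a| ^ 2 := (sq_abs a).symm
      _ < |b| ^ 2 := by nlinarith [abs_nonneg a]
      _ = b ^ 2 := sq_abs b
  have hlpos : 0 < lam := by
    rw [hlam]; exact Real.sqrt_pos.mpr (by linarith)
  have hl2 : lam ^ 2 = b ^ 2 - a ^ 2 := by
    rw [hlam, sq_sqrt (by linarith)]
  have hlne : lam ≠ 0 := ne_of_gt hlpos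
  have hK₀' : K₀ * (2 * lam * (a + b * Real.cos (lam * r))) =
      σ ^ 2 * (b * Real.sin (lam * r) - lam) := by
    rw [hK₀]; field_simp
  have hder : ∀ t : ℝ, HasDerivAt K
      (-(K₀ * lam) * Real.sin (lam * t) - σ ^ 2 / 2 * Real.cos (lam * t)) t := by
    intro t
    have h1 : HasDerivAt (fun t : ℝ => lam * t) lam t := by
      simpa using (hasDerivAt_id t).const_mul lam
    have hc := (Real.hasDerivAt_cos (lam * t)).comp t h1
    have hs := (Real.hasDerivAt_sin (lam * t)).comp t h1
    have := (hc.const_mul K₀).sub (hs.const_mul (σ ^ 2 / (2 * lam)))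
    rw [hK]
    refine HasDerivAt.congr_deriv this ?_
    field_simp
  have hpy := Real.sin_sq_add_cos_sq (lam * r)
  have hB : K₀ * (lam + b * Real.sin (lam * r)) * (2 * lam) =
      σ ^ 2 * (a - b * Real.cos (lam * r)) := by
    apply mul_right_cancel₀ hden
    linear_combination (lam + b * Real.sin (lam * r)) * hK₀' + σ ^ 2 * b ^ 2 * hpy -
      σ ^ 2 * hl2
  refine ⟨?_, ?_, ?_⟩
  · intro t ht
    have := hder t
    convert this using 1
    rw [hK]
    have hrt : lam * (r - t) = lam * r - lam * t := by ring
    simp only [hrt, Real.cos_sub, Real.sin_sub]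
    field_simp
    linear_combination Real.cos (lam * t) * hK₀' + Real.sin (lam * t) * hB
  · have := (hder 0).hasDerivWithinAt (s := Ici 0)
    simpa [neg_div] using this
  · rw [hK]
    simp only [mul_zero, Real.cos_zero, Real.sin_zero]
    field_simp
    linear_combination hK₀'
end

section
/- Let σ > 0, r > 0 and b < 0 with b·r ∈ (−π/2, 0). Define, for t ∈ [0, r], K(t) = −(σ²/(2b))·( ((1 − sin(br))/cos(br))·cos(bt) + sin(bt) ). Then for all t ∈ (0, r), K′(t) = b·K(r − t) (the delay Yule–Walker equation K′(t) = b K(t − r) with the even extension K(t − r) = K(r − t)), K′(0⁺) = −σ²/2, and 2·b·K(r) = −σ². -/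
open Real Set

/-- For the pure delay equation `dX(t) = bX(t−r)dt + σ dW(t)` with
`br ∈ (−π/2, 0)`, the function
`K(t) = −(σ²/(2b)) ( ((1 − sin(br))/cos(br)) cos(bt) + sin(bt) )` satisfies the delay
Yule–Walker equation `K′(t) = bK(r − t)` on `(0, r)`, has right derivative `−σ²/2`
at `0` and satisfies `2bK(r) = −σ²`. -/
theorem stmt_13 {σ r b : ℝ} (hσ : 0 < σ) (hr : 0 < r) (hb : b < 0)
    (hbr : b * r ∈ Ioo (-(π / 2)) 0)
    (K : ℝ → ℝ)
    (hK : K = fun t => -(σ ^ 2 / (2 * b)) *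
      ((1 - Real.sin (b * r)) / Real.cos (b * r) * Real.cos (b * t) + Real.sin (b * t))) :
    (∀ t ∈ Ioo 0 r, HasDerivAt K (b * K (r - t)) t) ∧
      HasDerivWithinAt K (-σ ^ 2 / 2) (Ici 0) 0 ∧
      2 * b * K r = -σ ^ 2 := by
  obtain ⟨h1, h2⟩ := hbr
  have hc : 0 < Real.cos (b * r) :=
    Real.cos_pos_of_mem_Ioo ⟨h1, lt_trans h2 (by positivity)⟩
  have hpyth : Real.sin (b * r) ^ 2 + Real.cos (b * r) ^ 2 = 1 := Real.sin_sq_add_cos_sq _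
  have hbne : b ≠ 0 := ne_of_lt hb
  have hd : ∀ t : ℝ, HasDerivAt K
      (-(σ ^ 2 / (2 * b)) *
        ((1 - Real.sin (b * r)) / Real.cos (b * r) * (-Real.sin (b * t) * b) +
          Real.cos (b * t) * b)) t := by
    intro t
    rw [hK]
    have hid : HasDerivAt (fun t : ℝ => b * t) b t := by
      simpa using (hasDerivAt_id t).const_mul b
    exact ((hid.cos.const_mul _).add hid.sin).const_mul _
  refine ⟨?_, ?_, ?_⟩
  · intro t ht
    have := hd t
    convert this using 1
    rw [hK]
    simp only
    have hrt : b * (r - t) = b * r - b * t := by ring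
    rw [hrt, Real.cos_sub, Real.sin_sub]
    field_simp
    linear_combination (Real.sin (b * t)) * hpyth
  · have : HasDerivWithinAt K _ (Ici 0) 0 := (hd 0).hasDerivWithinAt
    convert this using 1
    simp
    field_simp
  · rw [hK]
    simp only
    field_simp
    ring
end

section
/- Let σ > 0, r > 0 and b < 0 with b·r ∈ (−π/2, 0). Define K₁ on [0, r] by K₁(t) = −(σ²/(2b))·( ((1 − sin(br))/cos(br))·cos(bt) + sin(bt) ), and define K₂ on [r, 2r] by K₂(t) = −(σ²/(2b))·[ 2 + (sin(bt) − tan(br)·cos(bt))·(1 − 2·sin(br)) − cos(bt)/cos(br) ]. Then K₂(r) = K₁(r) and, for all t ∈ (r, 2r), K₂′(t) = b·K₁(t − r); equivalently, K₂(t) = b·∫_r^t K₁(s − r) ds + K₁(r) for all t ∈ [r, 2r]. (Where cos(bt) ≠ 0, K₂(t) coincides with the expression −(σ²/(2b))[2 + cos(bt){(tan(bt) − tan(br))(1 − 2 sin(br)) − 1/cos(br)}].) -/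
open Real Set

/-- For the pure delay equation with `br ∈ (−π/2, 0)`, with
`K₁(t) = −(σ²/(2b))(((1 − sin(br))/cos(br)) cos(bt) + sin(bt))` on `[0, r]` and
`K₂(t) = −(σ²/(2b))[2 + (sin(bt) − tan(br) cos(bt))(1 − 2 sin(br)) − cos(bt)/cos(br)]`
on `[r, 2r]`, we have `K₂(r) = K₁(r)`, `K₂′(t) = bK₁(t − r)` for `t ∈ (r, 2r)`, and
`K₂(t) = b ∫_r^t K₁(s − r) ds + K₁(r)` for `t ∈ [r, 2r]`. -/
theorem stmt_14 {σ r b : ℝ} (hσ : 0 < σ) (hr : 0 < r) (hb : b < 0)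
    (hbr : b * r ∈ Ioo (-(π / 2)) 0)
    (K₁ : ℝ → ℝ)
    (hK₁ : K₁ = fun t => -(σ ^ 2 / (2 * b)) *
      ((1 - Real.sin (b * r)) / Real.cos (b * r) * Real.cos (b * t) + Real.sin (b * t)))
    (K₂ : ℝ → ℝ)
    (hK₂ : K₂ = fun t => -(σ ^ 2 / (2 * b)) *
      (2 + (Real.sin (b * t) - Real.tan (b * r) * Real.cos (b * t)) *
          (1 - 2 * Real.sin (b * r)) - Real.cos (b * t) / Real.cos (b * r))) :
    K₂ r = K₁ r ∧
      (∀ t ∈ Ioo r (2 * r), HasDerivAt K₂ (b * K₁ (t - r)) t) ∧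
      ∀ t ∈ Icc r (2 * r), K₂ t = b * (∫ s in r..t, K₁ (s - r)) + K₁ r := by
  have hc : Real.cos (b * r) ≠ 0 := by
    have : 0 < Real.cos (b * r) := Real.cos_pos_of_mem_Ioo ⟨hbr.1, hbr.2.trans (by positivity)⟩
    linarith
  have hsc : Real.sin (b * r) ^ 2 + Real.cos (b * r) ^ 2 = 1 := Real.sin_sq_add_cos_sq _
  have heq : K₂ r = K₁ r := by
    subst hK₁ hK₂
    simp only [Real.tan_eq_sin_div_cos]
    field_simp
    ring
  have hderiv : ∀ t : ℝ, HasDerivAt K₂ (b * K₁ (t - r)) t := by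
    intro t
    have h1 : HasDerivAt (fun t : ℝ => Real.sin (b * t)) (Real.cos (b * t) * b) t := by
      simpa [Function.comp_def] using (Real.hasDerivAt_sin (b * t)).comp t ((hasDerivAt_id t).const_mul b)
    have h2 : HasDerivAt (fun t : ℝ => Real.cos (b * t)) (-Real.sin (b * t) * b) t := by
      simpa [Function.comp_def] using (Real.hasDerivAt_cos (b * t)).comp t ((hasDerivAt_id t).const_mul b)
    have hK2 : HasDerivAt K₂ (-(σ ^ 2 / (2 * b)) *
        ((Real.cos (b * t) * b - Real.tan (b * r) * (-Real.sin (b * t) * b)) *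
            (1 - 2 * Real.sin (b * r)) - (-Real.sin (b * t) * b) / Real.cos (b * r))) t := by
      rw [hK₂]
      exact ((((h1.sub (h2.const_mul _)).mul_const _).const_add 2).sub
        (h2.div_const _)).const_mul _
    convert hK2 using 1
    rw [hK₁]
    simp only [mul_sub, Real.sin_sub, Real.cos_sub, Real.tan_eq_sin_div_cos]
    have hb' : b ≠ 0 := ne_of_lt hb
    field_simp
    linear_combination (-Real.sin (b*t)) * hsc
  refine ⟨heq, fun t _ => hderiv t, fun t _ => ?_⟩
  have hcont : Continuous fun s => b * K₁ (s - r) := by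
    rw [hK₁]; fun_prop
  have hint := intervalIntegral.integral_eq_sub_of_hasDerivAt
    (fun s _ => hderiv s) (hcont.intervalIntegrable r t)
  rw [intervalIntegral.integral_const_mul] at hint
  rw [← heq]
  linarith
end

section
/- Let σ > 0, r > 0 and 0 < b < π²/(2r²), and set m = √(2b) (so that m·r/2 = r·√(b/2) < π/2 and cos(r√(b/2)) ≠ 0). Define, for t ∈ [0, r], K(t) = σ²·sin(√(2b)·(r/2 − t)) / (2r·√(2b)·cos(r·√(b/2))) + σ²/(2 b r²). Then for all t ∈ (0, r), K′(t) = −b·( ∫_0^t K(u) du + ∫_0^{r−t} K(u) du ); that is, K satisfies the delay Yule–Walker equation K′(t) = −b ∫_{−r}^0 K̃(t + s) ds of the uniform-delay equation, where K̃ denotes the even extension K̃(u) = K(|u|). -/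
open Real Set

/-- For the uniform-delay equation
`dX(t) = −b(∫_{−r}^0 X(t+s) ds) dt + σ dW(t)` with `0 < b < π²/(2r²)`, the function
`K(t) = σ² sin(√(2b)(r/2 − t))/(2r√(2b) cos(r√(b/2))) + σ²/(2br²)` satisfies on
`(0, r)` the delay Yule–Walker equation
`K′(t) = −b(∫_0^t K(u) du + ∫_0^{r−t} K(u) du)`, i.e.
`K′(t) = −b ∫_{−r}^0 K̃(t+s) ds` with `K̃` the even extension of `K`. -/
theorem stmt_16 {σ r b : ℝ} (hσ : 0 < σ) (hr : 0 < r)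
    (hb : 0 < b) (hb' : b < π ^ 2 / (2 * r ^ 2))
    (K : ℝ → ℝ)
    (hK : K = fun t =>
      σ ^ 2 * Real.sin (Real.sqrt (2 * b) * (r / 2 - t)) /
        (2 * r * Real.sqrt (2 * b) * Real.cos (r * Real.sqrt (b / 2))) +
      σ ^ 2 / (2 * b * r ^ 2)) :
    ∀ t ∈ Ioo 0 r,
      HasDerivAt K
        (-b * ((∫ u in (0:ℝ)..t, K u) + ∫ u in (0:ℝ)..(r - t), K u)) t := by
  have hb2 : (0:ℝ) < 2 * b := by linarith
  set m := Real.sqrt (2 * b) with hm_def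
  have hm0 : 0 < m := Real.sqrt_pos.mpr hb2
  have hm2 : m ^ 2 = 2 * b := Real.sq_sqrt hb2.le
  have hhalf : Real.sqrt (b / 2) = m / 2 := by
    have h1 : (m / 2) ^ 2 = b / 2 := by rw [div_pow, hm2]; ring
    rw [← h1, Real.sqrt_sq (by positivity)]
  have hmr : m * r < π := by
    have h2 : b * (2 * r ^ 2) < π ^ 2 :=
      (lt_div_iff₀ (by positivity)).mp hb'
    have h3 : (m * r) ^ 2 < π ^ 2 := by nlinarith [hm2]
    exact lt_of_pow_lt_pow_left₀ 2 Real.pi_pos.le h3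
  have hcos : 0 < Real.cos (m * r / 2) := by
    apply Real.cos_pos_of_mem_Ioo
    constructor
    · nlinarith [Real.pi_pos, mul_pos hm0 hr]
    · linarith
  set c := Real.cos (m * r / 2) with hc_def
  have hc0 : c ≠ 0 := ne_of_gt hcos
  have hKc : K = fun t =>
      σ ^ 2 * Real.sin (m * (r / 2 - t)) / (2 * r * m * c) + σ ^ 2 / (2 * b * r ^ 2) := by
    rw [hK, hhalf]
    have : r * (m / 2) = m * r / 2 := by ring
    rw [this]
  have hKcont : Continuous K := by
    rw [hKc]; fun_prop
  -- value of the integral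
  have hint : ∀ s : ℝ, (∫ u in (0:ℝ)..s, K u) =
      σ ^ 2 * (Real.cos (m * (r / 2 - s)) - c) / (2 * r * m * c * m)
        + σ ^ 2 / (2 * b * r ^ 2) * s := by
    intro s
    have hderiv : ∀ u ∈ Set.uIcc (0:ℝ) s,
        HasDerivAt (fun u => σ ^ 2 * (Real.cos (m * (r / 2 - u)) - c) / (2 * r * m * c * m)
            + σ ^ 2 / (2 * b * r ^ 2) * u) (K u) u := by
      intro u _
      have h1 : HasDerivAt (fun u : ℝ => m * (r / 2 - u)) (-m) u := by
        simpa using ((hasDerivAt_id u).const_sub (r / 2)).const_mul m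
      have h2 : HasDerivAt (fun u : ℝ => Real.cos (m * (r / 2 - u)))
          (m * Real.sin (m * (r / 2 - u))) u := by
        have := (Real.hasDerivAt_cos (m * (r / 2 - u))).comp u h1
        exact this.congr_deriv (by ring)
      have h3 : HasDerivAt (fun u : ℝ =>
          σ ^ 2 * (Real.cos (m * (r / 2 - u)) - c) / (2 * r * m * c * m)
            + σ ^ 2 / (2 * b * r ^ 2) * u)
          (σ ^ 2 * (m * Real.sin (m * (r / 2 - u))) / (2 * r * m * c * m)
            + σ ^ 2 / (2 * b * r ^ 2)) u := by
        have h4 := (((h2.sub_const c).const_mul (σ ^ 2)).div_const (2 * r * m * c * m))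
        have hlin : HasDerivAt (fun u : ℝ => σ ^ 2 / (2 * b * r ^ 2) * u)
            (σ ^ 2 / (2 * b * r ^ 2)) u := by
          simpa using (hasDerivAt_id u).const_mul (σ ^ 2 / (2 * b * r ^ 2))
        exact h4.add hlin
      convert h3 using 1
      rw [hKc]
      field_simp
    have := intervalIntegral.integral_eq_sub_of_hasDerivAt hderiv
      (hKcont.intervalIntegrable 0 s)
    rw [this, show m * (r / 2 - 0) = m * r / 2 by ring, ← hc_def]
    ring
  intro t ht
  -- derivative of K at t
  have h1 : HasDerivAt (fun u : ℝ => m * (r / 2 - u)) (-m) t := by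
    simpa using ((hasDerivAt_id t).const_sub (r / 2)).const_mul m
  have h2 : HasDerivAt (fun u : ℝ => Real.sin (m * (r / 2 - u)))
      (-(m * Real.cos (m * (r / 2 - t)))) t := by
    have := (Real.hasDerivAt_sin (m * (r / 2 - t))).comp t h1
    exact this.congr_deriv (by ring)
  have h3 : HasDerivAt K
      (σ ^ 2 * (-(m * Real.cos (m * (r / 2 - t)))) / (2 * r * m * c)) t := by
    rw [hKc]
    simpa using (((h2.const_mul (σ ^ 2)).div_const (2 * r * m * c)).add_const
      (σ ^ 2 / (2 * b * r ^ 2)))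
  convert h3 using 1
  rw [hint t, hint (r - t)]
  have hcos_eq : Real.cos (m * (r / 2 - (r - t))) = Real.cos (m * (r / 2 - t)) := by
    rw [show m * (r / 2 - (r - t)) = -(m * (r / 2 - t)) by ring, Real.cos_neg]
  rw [hcos_eq]
  have hbe : b = m ^ 2 / 2 := by linarith [hm2]
  rw [hbe]
  field_simp
  ring
end
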